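/- Let μ be a directed distance on a nonempty finite set S and let n be a positive integer. The following are equivalent: (a) there exist n+1 affinely independent points of ℝ^{S^{cr}} whose convex hull is contained in T_μ (i.e., dim T_μ ≥ n); (b) there exist n-element subsets A, B ⊆ S and a bijection σ : A → B such that for every matching M ⊆ A × B (a set of pairs in which distinct pairs share neither first nor second coordinates) with M ≠ { (a, σ(a)) : a ∈ A }, one has Σ_{(a,b) ∈ M} μ(a,b) < Σ_{a ∈ A} μ(a, σ(a)); that is, the maximum weight over all matchings of the complete bipartite graph on (A,B) with weights μ(a,b) is attained uniquely, by the perfect matching given by σ. -/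

import Mathlib

open scoped BigOperators

/-- Points of `ℝ^{S^{cr}}`: pairs `p = (p^c, p^r)` of functions `S → ℝ`,
with the componentwise partial order (the product/pi order). -/
abbrev Pt (S : Type*) := (S → ℝ) × (S → ℝ)

/-- `μ` is a directed distance: nonnegative with zero diagonal. -/
def DirDist {S : Type*} (μ : S → S → ℝ) : Prop :=
  (∀ s t, 0 ≤ μ s t) ∧ (∀ s, μ s s = 0)

/-- `d` is a directed metric: a directed distance satisfying the triangle inequality. -/
def DirMetric {V : Type*} (d : V → V → ℝ) : Prop :=
  DirDist d ∧ ∀ x y z, d x z ≤ d x y + d y z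

/-- The polyhedron `Π_μ`. -/
def PiP {S : Type*} (μ : S → S → ℝ) : Set (Pt S) :=
  {p | ∀ s t, μ s t ≤ p.1 s + p.2 t}

/-- The polyhedron `P_μ = Π_μ ∩ ℝ_+^{S^{cr}}`. -/
def PP {S : Type*} (μ : S → S → ℝ) : Set (Pt S) :=
  {p ∈ PiP μ | 0 ≤ p}

/-- The directed tight span `T_μ`: minimal elements of `P_μ`. -/
def TT {S : Type*} (μ : S → S → ℝ) : Set (Pt S) :=
  {p ∈ PP μ | ∀ q ∈ PP μ, q ≤ p → q = p}

/-- `Q_μ`: minimal elements of `Π_μ`. -/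
def QQ {S : Type*} (μ : S → S → ℝ) : Set (Pt S) :=
  {p ∈ PiP μ | ∀ q ∈ PiP μ, q ≤ p → q = p}

/-- `Q_μ^+ = Q_μ ∩ ℝ_+^{S^{cr}}`. -/
def QP {S : Type*} (μ : S → S → ℝ) : Set (Pt S) :=
  QQ μ ∩ {p | 0 ≤ p}

/-- `D_∞^+(f,g) = max_x (g(x) - f(x))_+`. -/
noncomputable def Dplus {X : Type*} [Fintype X] (f g : X → ℝ) : ℝ :=
  ⨆ x, max (g x - f x) 0

/-- `D_∞(p,q) = max ( D_∞^+(p^c,q^c), D_∞^+(q^r,p^r) )`. -/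
noncomputable def Dinf {S : Type*} [Fintype S] (p q : Pt S) : ℝ :=
  max (Dplus p.1 q.1) (Dplus q.2 p.2)

/-- A subset `R` is balanced if no pair `p, q ∈ R` satisfies `p^c < q^c`,
and no pair satisfies `p^r < q^r`. -/
def BalancedSet {S : Type*} (R : Set (Pt S)) : Prop :=
  (¬ ∃ p ∈ R, ∃ q ∈ R, ∀ s, p.1 s < q.1 s) ∧
  (¬ ∃ p ∈ R, ∃ q ∈ R, ∀ s, p.2 s < q.2 s)

/-- The vector `e = (1, -1)` spanning the linearity space of `Π_μ`. -/
def eVec (S : Type*) : Pt S := (fun _ => 1, fun _ => -1)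

/-- `R ⊆ Q_μ` is a section: every point of `Q_μ` differs from exactly one point
of `R` by a multiple of `e`. -/
def IsSection {S : Type*} (μ : S → S → ℝ) (R : Set (Pt S)) : Prop :=
  R ⊆ QQ μ ∧ ∀ q ∈ QQ μ, ∃! p, p ∈ R ∧ ∃ α : ℝ, q - p = α • eVec S

/-- The length of the cycle `(x 0, x 1, …, x m)` with respect to `d`. -/
def cycLen {V : Type*} (d : V → V → ℝ) (m : ℕ) (x : Fin (m + 1) → V) : ℝ :=
  ∑ i, d (x i) (x (i + 1))



section Aux
set_option linter.unusedSectionVars false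
open Finset
variable {S : Type*} [Fintype S] [Nonempty S] [DecidableEq S]

lemma pt_le_iff (p q : Pt S) : p ≤ q ↔ (∀ s, p.1 s ≤ q.1 s) ∧ (∀ s, p.2 s ≤ q.2 s) := by
  constructor
  · rintro ⟨h1, h2⟩; exact ⟨fun s => h1 s, fun s => h2 s⟩
  · rintro ⟨h1, h2⟩; exact ⟨fun s => h1 s, fun s => h2 s⟩

lemma pt_zero_le_iff (p : Pt S) : 0 ≤ p ↔ (∀ s, 0 ≤ p.1 s) ∧ (∀ s, 0 ≤ p.2 s) := pt_le_iff 0 p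

/-- characterization of membership in the tight span -/
lemma mem_TT_iff (μ : S → S → ℝ) (p : Pt S) :
    p ∈ TT μ ↔ p ∈ PP μ ∧ (∀ s, 0 < p.1 s → ∃ t, p.1 s + p.2 t = μ s t) ∧
      (∀ t, 0 < p.2 t → ∃ s, p.1 s + p.2 t = μ s t) := by
  constructor
  · rintro ⟨hp, hmin⟩
    refine ⟨hp, ?_, ?_⟩
    · intro s hs
      by_contra hno
      push_neg at hno
      have hstrict : ∀ t, μ s t < p.1 s + p.2 t := fun t =>
        lt_of_le_of_ne (hp.1 s t) (fun h => hno t h.symm)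
      set η := min (p.1 s) (univ.inf' univ_nonempty (fun t => p.1 s + p.2 t - μ s t)) with hη
      have hη0 : 0 < η := by
        refine lt_min hs ?_
        rw [Finset.lt_inf'_iff]
        intro t _
        linarith [hstrict t]
      set q : Pt S := (fun x => if x = s then p.1 s - η else p.1 x, p.2) with hq
      have hqP : q ∈ PP μ := by
        refine ⟨fun x t => ?_, ?_⟩
        · simp only [hq]
          by_cases hx : x = s
          · subst hx
            simp only [if_pos rfl, if_true]
            have h1 : (univ.inf' univ_nonempty (fun t => p.1 x + p.2 t - μ x t)) ≤ p.1 x + p.2 t - μ x t :=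
              Finset.inf'_le _ (mem_univ t)
            have : η ≤ p.1 x + p.2 t - μ x t := le_trans (min_le_right _ _) h1
            linarith
          · simp only [if_neg hx]; exact hp.1 x t
        · rw [pt_zero_le_iff]
          constructor
          · intro x
            simp only [hq]
            by_cases hx : x = s
            · simp only [if_pos hx]
              have : η ≤ p.1 s := min_le_left _ _
              subst hx; linarith
            · simp only [if_neg hx]; exact (pt_zero_le_iff p).1 hp.2 |>.1 x
          · exact (pt_zero_le_iff p).1 hp.2 |>.2
      have hqle : q ≤ p := by
        rw [pt_le_iff]
        refine ⟨fun x => ?_, fun _ => le_rfl⟩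
        simp only [hq]
        by_cases hx : x = s
        · simp only [if_pos hx]; subst hx; linarith
        · simp only [if_neg hx]; exact le_rfl
      have := hmin q hqP hqle
      have : q.1 s = p.1 s := by rw [this]
      simp only [hq, if_pos rfl, if_true] at this
      linarith
    · intro t ht
      by_contra hno
      push_neg at hno
      have hstrict : ∀ s, μ s t < p.1 s + p.2 t := fun s =>
        lt_of_le_of_ne (hp.1 s t) (fun h => hno s h.symm)
      set η := min (p.2 t) (univ.inf' univ_nonempty (fun s => p.1 s + p.2 t - μ s t)) with hη
      have hη0 : 0 < η := by
        refine lt_min ht ?_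
        rw [Finset.lt_inf'_iff]
        intro s _
        linarith [hstrict s]
      set q : Pt S := (p.1, fun x => if x = t then p.2 t - η else p.2 x) with hq
      have hqP : q ∈ PP μ := by
        refine ⟨fun s x => ?_, ?_⟩
        · simp only [hq]
          by_cases hx : x = t
          · subst hx
            simp only [if_pos rfl, if_true]
            have h1 : (univ.inf' univ_nonempty (fun s => p.1 s + p.2 x - μ s x)) ≤ p.1 s + p.2 x - μ s x :=
              Finset.inf'_le _ (mem_univ s)
            have : η ≤ p.1 s + p.2 x - μ s x := le_trans (min_le_right _ _) h1
            linarith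
          · simp only [if_neg hx]; exact hp.1 s x
        · rw [pt_zero_le_iff]
          constructor
          · exact (pt_zero_le_iff p).1 hp.2 |>.1
          · intro x
            simp only [hq]
            by_cases hx : x = t
            · simp only [if_pos hx]
              have : η ≤ p.2 t := min_le_left _ _
              subst hx; linarith
            · simp only [if_neg hx]; exact (pt_zero_le_iff p).1 hp.2 |>.2 x
      have hqle : q ≤ p := by
        rw [pt_le_iff]
        refine ⟨fun _ => le_rfl, fun x => ?_⟩
        simp only [hq]
        by_cases hx : x = t
        · simp only [if_pos hx]; subst hx; linarith
        · simp only [if_neg hx]; exact le_rfl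
      have := hmin q hqP hqle
      have : q.2 t = p.2 t := by rw [this]
      simp only [hq, if_pos rfl, if_true] at this
      linarith
  · rintro ⟨hp, hc, hr⟩
    refine ⟨hp, fun q hq hqle => ?_⟩
    by_contra hne
    rw [pt_le_iff] at hqle
    have : (∃ s, q.1 s < p.1 s) ∨ (∃ t, q.2 t < p.2 t) := by
      by_contra hcon
      push_neg at hcon
      apply hne
      ext x
      · exact le_antisymm (hqle.1 x) (hcon.1 x)
      · exact le_antisymm (hqle.2 x) (hcon.2 x)
    rcases this with ⟨s, hs⟩ | ⟨t, ht⟩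
    · have hps : 0 < p.1 s := lt_of_le_of_lt ((pt_zero_le_iff q).1 hq.2 |>.1 s) hs
      obtain ⟨t, htight⟩ := hc s hps
      have := hq.1 s t
      have := hqle.2 t
      linarith
    · have hpt : 0 < p.2 t := lt_of_le_of_lt ((pt_zero_le_iff q).1 hq.2 |>.2 t) ht
      obtain ⟨s, htight⟩ := hr t hpt
      have := hq.1 s t
      have := hqle.1 s
      linarith

section Forward
variable {S : Type*} [Fintype S] [Nonempty S] [DecidableEq S]

lemma forward (μ : S → S → ℝ) (hμ : DirDist μ) (n : ℕ) (hn : 0 < n)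
    (f : Fin (n + 1) → Pt S) (hf : AffineIndependent ℝ f)
    (hhull : convexHull ℝ (Set.range f) ⊆ TT μ) :
    ∃ (A B : Finset S) (σ : S → S), A.card = n ∧ B.card = n ∧
      Set.BijOn σ ↑A ↑B ∧
      ∀ M : Finset (S × S), ↑M ⊆ (↑A ×ˢ ↑B : Set (S × S)) →
        (∀ p ∈ M, ∀ q ∈ M, p ≠ q → p.1 ≠ q.1 ∧ p.2 ≠ q.2) →
        M ≠ A.image (fun a => (a, σ a)) →
        ∑ p ∈ M, μ p.1 p.2 < ∑ a ∈ A, μ a (σ a) := by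
  classical
  set w : Fin (n+1) → ℝ := fun _ => ((n:ℝ)+1)⁻¹ with hw
  have hwpos : ∀ i, 0 < w i := by
    intro i; rw [hw]; positivity
  have hwsum : ∑ _i : Fin (n+1), ((n:ℝ)+1)⁻¹ = 1 := by
    rw [Finset.sum_const, Finset.card_univ, Fintype.card_fin]
    rw [nsmul_eq_mul]
    push_cast
    field_simp
  set p : Pt S := ∑ i, w i • f i with hp
  have hpmem : p ∈ TT μ := by
    apply hhull
    rw [hp, ← Finset.centerMass_eq_of_sum_1 _ f hwsum]
    exact Finset.centerMass_mem_convexHull _ (fun i _ => le_of_lt (hwpos i))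
      (by rw [hwsum]; norm_num) (fun i _ => Set.mem_range_self i)
  have hfTT : ∀ i, f i ∈ TT μ := fun i => hhull (subset_convexHull ℝ _ (Set.mem_range_self i))
  have hp1 : ∀ s, p.1 s = ∑ i, w i * (f i).1 s := by
    intro s
    rw [hp, Prod.fst_sum, Finset.sum_apply]
    exact Finset.sum_congr rfl (fun i _ => by rw [Prod.smul_fst, Pi.smul_apply, smul_eq_mul])
  have hp2 : ∀ t, p.2 t = ∑ i, w i * (f i).2 t := by
    intro t
    rw [hp, Prod.snd_sum, Finset.sum_apply]
    exact Finset.sum_congr rfl (fun i _ => by rw [Prod.smul_snd, Pi.smul_apply, smul_eq_mul])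
  have havg : ∀ (g : Fin (n+1) → ℝ), (∀ i, 0 ≤ g i) → ∑ i, w i * g i = 0 → ∀ i, g i = 0 := by
    intro g hg hsum i
    have hterm : ∀ j ∈ Finset.univ, 0 ≤ w j * g j :=
      fun j _ => mul_nonneg (le_of_lt (hwpos j)) (hg j)
    have h0 := (Finset.sum_eq_zero_iff_of_nonneg hterm).1 hsum i (Finset.mem_univ i)
    rcases mul_eq_zero.1 h0 with h | h
    · exact absurd h (ne_of_gt (hwpos i))
    · exact h
  have htightall : ∀ s t, p.1 s + p.2 t = μ s t → ∀ i, (f i).1 s + (f i).2 t = μ s t := by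
    intro s t htight i
    have hsum0 : ∑ i, w i * ((f i).1 s + (f i).2 t - μ s t) = 0 := by
      calc ∑ i, w i * ((f i).1 s + (f i).2 t - μ s t)
          = ∑ i, (w i * (f i).1 s + w i * (f i).2 t - w i * μ s t) :=
            Finset.sum_congr rfl (fun i _ => by ring)
        _ = ((∑ i, w i * (f i).1 s) + ∑ i, w i * (f i).2 t) - ∑ i, w i * μ s t := by
            rw [Finset.sum_sub_distrib, Finset.sum_add_distrib]
        _ = p.1 s + p.2 t - μ s t := by
            rw [← hp1, ← hp2, ← Finset.sum_mul, hwsum, one_mul]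
        _ = 0 := by rw [htight]; ring
    have hnn : ∀ i, 0 ≤ (f i).1 s + (f i).2 t - μ s t :=
      fun i => by linarith [(hfTT i).1.1 s t]
    have := havg _ hnn hsum0 i
    linarith
  have hzero1 : ∀ s, p.1 s = 0 → ∀ i, (f i).1 s = 0 := by
    intro s hzs i
    exact havg (fun i => (f i).1 s) (fun i => ((pt_zero_le_iff _).1 (hfTT i).1.2).1 s)
      (by rw [← hp1 s]; exact hzs) i
  have hzero2 : ∀ t, p.2 t = 0 → ∀ i, (f i).2 t = 0 := by
    intro t hzt i
    exact havg (fun i => (f i).2 t) (fun i => ((pt_zero_le_iff _).1 (hfTT i).1.2).2 t)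
      (by rw [← hp2 t]; exact hzt) i
  set tight : S → S → Prop := fun s t => p.1 s + p.2 t = μ s t with htightdef
  set Adj : (S ⊕ S) → (S ⊕ S) → Prop := fun v w =>
      (∃ s t, v = Sum.inl s ∧ w = Sum.inr t ∧ tight s t) ∨
      (∃ s t, v = Sum.inr t ∧ w = Sum.inl s ∧ tight s t) with hAdj
  have hAdjSymm : Symmetric Adj := by
    intro a b hab
    rcases hab with ⟨s,t,rfl,rfl,h'⟩|⟨s,t,rfl,rfl,h'⟩
    · exact Or.inr ⟨s,t,rfl,rfl,h'⟩
    · exact Or.inl ⟨s,t,rfl,rfl,h'⟩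
  letI stR : Setoid (S ⊕ S) := ⟨Relation.ReflTransGen Adj,
    ⟨fun _ => Relation.ReflTransGen.refl,
     fun h => (by haveI : Std.Symm Adj := ⟨fun a b h => hAdjSymm h⟩; exact Std.Symm.symm _ _ h),
     fun h1 h2 => Relation.ReflTransGen.trans h1 h2⟩⟩
  letI : Fintype (Quotient stR) := @Quotient.fintype _ _ stR (fun _ _ => Classical.propDecidable _)
  have hstR : ∀ v w, stR.r v w ↔ Relation.ReflTransGen Adj v w := fun _ _ => Iff.rfl
  set F : Pt S → (S ⊕ S) → ℝ := fun d => Sum.elim d.1 (fun t => -(d.2 t)) with hF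
  have hFconst : ∀ d : Pt S, (∀ s t, tight s t → d.1 s + d.2 t = 0) →
      ∀ v u : S ⊕ S, stR.r v u → F d v = F d u := by
    intro d hd v u h
    rw [hstR] at h
    induction h with
    | refl => rfl
    | tail _ hadj ih =>
      refine ih.trans ?_
      rcases hadj with ⟨s,t,rfl,rfl,ht⟩|⟨s,t,rfl,rfl,ht⟩
      · have := hd s t ht
        simp only [hF, Sum.elim_inl, Sum.elim_inr]
        linarith
      · have := hd s t ht
        simp only [hF, Sum.elim_inl, Sum.elim_inr]
        linarith
  set zeroV : (S ⊕ S) → Prop := Sum.elim (fun s => p.1 s = 0) (fun t => p.2 t = 0) with hzeroV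
  set Free : Quotient stR → Prop := fun c => ∀ v, Quotient.mk stR v = c → ¬ zeroV v with hFree
  set FS : Finset (Quotient stR) := Finset.univ.filter Free with hFS
  -- dimension bound
  have hcard : n ≤ FS.card := by
    have hli := (affineIndependent_iff_linearIndependent_vsub ℝ f 0).1 hf
    set dv : {x : Fin (n+1) // x ≠ 0} → Pt S := fun i => f ↑i -ᵥ f 0 with hdv
    have hdv1 : ∀ i s, (dv i).1 s = (f ↑i).1 s - (f 0).1 s := fun i s => rfl
    have hdv2 : ∀ i t, (dv i).2 t = (f ↑i).2 t - (f 0).2 t := fun i t => rfl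
    set g : {x : Fin (n+1) // x ≠ 0} → (↥FS → ℝ) :=
      fun j c => F (dv j) (Quotient.out (↑c : Quotient stR)) with hg
    have hgli : LinearIndependent ℝ g := by
      rw [linearIndependent_iff']
      intro u c hrel j hj
      set d : Pt S := ∑ j' ∈ u, c j' • dv j' with hd
      have hd1 : ∀ s, d.1 s = ∑ j' ∈ u, c j' * (dv j').1 s := by
        intro s
        rw [hd, Prod.fst_sum, Finset.sum_apply]
        exact Finset.sum_congr rfl (fun i _ => by rw [Prod.smul_fst, Pi.smul_apply, smul_eq_mul])
      have hd2 : ∀ t, d.2 t = ∑ j' ∈ u, c j' * (dv j').2 t := by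
        intro t
        rw [hd, Prod.snd_sum, Finset.sum_apply]
        exact Finset.sum_congr rfl (fun i _ => by rw [Prod.smul_snd, Pi.smul_apply, smul_eq_mul])
      have hdtight : ∀ s t, tight s t → d.1 s + d.2 t = 0 := by
        intro s t ht
        rw [hd1, hd2, ← Finset.sum_add_distrib]
        apply Finset.sum_eq_zero
        intro j' _
        have h1 := htightall s t ht ↑j'
        have h0 := htightall s t ht 0
        rw [hdv1, hdv2]
        linear_combination c j' * h1 - c j' * h0
      have hdzero : ∀ v, zeroV v → F d v = 0 := by
        intro v hv
        cases v with
        | inl s =>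
          simp only [hF, Sum.elim_inl]
          rw [hd1]
          apply Finset.sum_eq_zero
          intro j' _
          rw [hdv1, hzero1 s hv ↑j', hzero1 s hv 0]
          ring
        | inr t =>
          simp only [hF, Sum.elim_inr]
          rw [hd2]
          rw [Finset.sum_eq_zero]
          · ring
          intro j' _
          rw [hdv2, hzero2 t hv ↑j', hzero2 t hv 0]
          ring
      have hFlin : ∀ v, F d v = ∑ j' ∈ u, c j' * F (dv j') v := by
        intro v
        cases v with
        | inl s =>
          simp only [hF, Sum.elim_inl]
          exact hd1 s
        | inr t =>
          simp only [hF, Sum.elim_inr]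
          rw [hd2, ← Finset.sum_neg_distrib]
          exact Finset.sum_congr rfl (fun i _ => by ring)
      have hfree0 : ∀ c' : Quotient stR, Free c' → F d (Quotient.out c') = 0 := by
        intro c' hc'
        have hcFS : c' ∈ FS := Finset.mem_filter.2 ⟨Finset.mem_univ _, hc'⟩
        have h1 := congrFun hrel ⟨c', hcFS⟩
        rw [Finset.sum_apply] at h1
        rw [hFlin]
        calc ∑ j' ∈ u, c j' * F (dv j') (Quotient.out c')
            = ∑ j' ∈ u, (c j' • g j') ⟨c', hcFS⟩ :=
              Finset.sum_congr rfl (fun i _ => by rw [Pi.smul_apply, smul_eq_mul, hg])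
          _ = 0 := h1
      have hall0 : ∀ v, F d v = 0 := by
        intro v
        by_cases hfv : Free (Quotient.mk stR v)
        · have h1 : F d v = F d (Quotient.out (Quotient.mk stR v)) :=
            hFconst d hdtight _ _ (Setoid.symm (Quotient.mk_out v))
          rw [h1, hfree0 _ hfv]
        · have hfv2 : ∃ v₀, Quotient.mk stR v₀ = Quotient.mk stR v ∧ zeroV v₀ := by
            by_contra hno
            push_neg at hno
            exact hfv (fun v₀ h => hno v₀ h)
          obtain ⟨v₀, hv₀c, hv₀z⟩ := hfv2
          have hrel' : stR.r v v₀ := Quotient.exact hv₀c.symm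
          rw [hFconst d hdtight v v₀ hrel', hdzero v₀ hv₀z]
      have hd0 : d = 0 := by
        apply Prod.ext
        · funext s
          have := hall0 (Sum.inl s)
          simpa [hF] using this
        · funext t
          have := hall0 (Sum.inr t)
          simp only [hF, Sum.elim_inr, neg_eq_zero] at this
          simpa using this
      exact linearIndependent_iff'.1 hli u c (by rw [← hd]; exact hd0) j hj
    have hle := hgli.fintype_card_le_finrank
    rw [Module.finrank_pi] at hle
    have hcι : Fintype.card {x : Fin (n+1) // x ≠ 0} = n := by
      simp [Fintype.card_subtype_compl, Fintype.card_subtype_eq]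
    rw [hcι, Fintype.card_coe] at hle
    exact hle
  -- choose an edge in each free component
  have hppos1 : ∀ s, 0 ≤ p.1 s := ((pt_zero_le_iff p).1 hpmem.1.2).1
  have hppos2 : ∀ t, 0 ≤ p.2 t := ((pt_zero_le_iff p).1 hpmem.1.2).2
  have hTTp := (mem_TT_iff μ p).1 hpmem
  have hedge : ∀ c : Quotient stR, ∃ e : S × S, Free c →
      (tight e.1 e.2 ∧ Quotient.mk stR (Sum.inl e.1) = c ∧ Quotient.mk stR (Sum.inr e.2) = c
        ∧ 0 < p.1 e.1 ∧ 0 < p.2 e.2) := by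
    intro c
    by_cases hc : Free c
    · have hvc : Quotient.mk stR (Quotient.out c) = c := Quotient.out_eq c
      have hnz := hc _ hvc
      have hlr : ∃ s t, tight s t ∧
          (Quotient.out c = Sum.inl s ∨ Quotient.out c = Sum.inr t) := by
        cases hout : Quotient.out c with
        | inl s =>
          rw [hout] at hnz
          have hpos : 0 < p.1 s := lt_of_le_of_ne (hppos1 s) (fun h => hnz (by simpa [hzeroV] using h.symm))
          obtain ⟨t, ht⟩ := hTTp.2.1 s hpos
          exact ⟨s, t, ht, Or.inl rfl⟩
        | inr t =>
          rw [hout] at hnz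
          have hpos : 0 < p.2 t := lt_of_le_of_ne (hppos2 t) (fun h => hnz (by simpa [hzeroV] using h.symm))
          obtain ⟨s, hs⟩ := hTTp.2.2 t hpos
          exact ⟨s, t, hs, Or.inr rfl⟩
      obtain ⟨s, t, hst, hor⟩ := hlr
      have hadj : Quotient.mk stR (Sum.inl s) = Quotient.mk stR (Sum.inr t) :=
        Quotient.sound (Relation.ReflTransGen.single (Or.inl ⟨s, t, rfl, rfl, hst⟩))
      have hclass : Quotient.mk stR (Sum.inl s) = c ∧ Quotient.mk stR (Sum.inr t) = c := by
        rcases hor with h | h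
        · rw [h] at hvc
          exact ⟨hvc, hadj ▸ hvc⟩
        · rw [h] at hvc
          exact ⟨hadj.trans hvc, hvc⟩
      refine ⟨(s, t), fun _ => ⟨hst, hclass.1, hclass.2, ?_, ?_⟩⟩
      · refine lt_of_le_of_ne (hppos1 s) (fun h => hc _ hclass.1 ?_)
        simpa [hzeroV] using h.symm
      · refine lt_of_le_of_ne (hppos2 t) (fun h => hc _ hclass.2 ?_)
        simpa [hzeroV] using h.symm
    · exact ⟨(Classical.arbitrary S, Classical.arbitrary S), fun h => absurd h hc⟩
  choose eC heC using hedge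
  obtain ⟨T, hTFS, hTcard⟩ := Finset.exists_subset_card_eq hcard
  have hTfree : ∀ c ∈ T, Free c := fun c hc => (Finset.mem_filter.1 (hTFS hc)).2
  have hprop := fun c (hc : c ∈ T) => heC c (hTfree c hc)
  set A : Finset S := T.image (fun c => (eC c).1) with hA
  set B : Finset S := T.image (fun c => (eC c).2) with hB
  set σ : S → S := fun s => (eC (Quotient.mk stR (Sum.inl s))).2 with hσ
  have hσval : ∀ c ∈ T, σ ((eC c).1) = (eC c).2 := by
    intro c hc
    rw [hσ]
    simp only
    rw [(hprop c hc).2.1]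
  -- injectivity facts
  have hinj1 : Set.InjOn (fun c => (eC c).1) ↑T := by
    intro c hc c' hc' h
    have hnice : (eC c).1 = (eC c').1 := h
    rw [← (hprop c hc).2.1, ← (hprop c' hc').2.1, hnice]
  have hinj2 : Set.InjOn (fun c => (eC c).2) ↑T := by
    intro c hc c' hc' h
    have hnice : (eC c).2 = (eC c').2 := h
    rw [← (hprop c hc).2.2.1, ← (hprop c' hc').2.2.1, hnice]
  have hAcard : A.card = n := by rw [hA, Finset.card_image_of_injOn hinj1, hTcard]
  have hBcard : B.card = n := by rw [hB, Finset.card_image_of_injOn hinj2, hTcard]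
  -- tightness structure on A, B
  have hmemA : ∀ a ∈ A, ∃ c ∈ T, (eC c).1 = a := by
    intro a ha
    rw [hA] at ha
    obtain ⟨c, hc, hca⟩ := Finset.mem_image.1 ha
    exact ⟨c, hc, hca⟩
  have hmemB : ∀ b ∈ B, ∃ c ∈ T, (eC c).2 = b := by
    intro b hb
    rw [hB] at hb
    obtain ⟨c, hc, hcb⟩ := Finset.mem_image.1 hb
    exact ⟨c, hc, hcb⟩
  have hbij : Set.BijOn σ ↑A ↑B := by
    refine ⟨?_, ?_, ?_⟩
    · intro a ha
      obtain ⟨c, hc, rfl⟩ := hmemA a ha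
      rw [hσval c hc]
      exact Finset.mem_coe.2 (Finset.mem_image.2 ⟨c, hc, rfl⟩)
    · intro a ha a' ha' hs
      obtain ⟨c, hc, rfl⟩ := hmemA a (Finset.mem_coe.1 ha)
      obtain ⟨c', hc', rfl⟩ := hmemA a' (Finset.mem_coe.1 ha')
      rw [hσval c hc, hσval c' hc'] at hs
      rw [hinj2 hc hc' hs]
    · intro b hb
      obtain ⟨c, hc, rfl⟩ := hmemB b (Finset.mem_coe.1 hb)
      exact ⟨(eC c).1, Finset.mem_coe.2 (Finset.mem_image.2 ⟨c, hc, rfl⟩), hσval c hc⟩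
  have htightA : ∀ a ∈ A, p.1 a + p.2 (σ a) = μ a (σ a) := by
    intro a ha
    obtain ⟨c, hc, rfl⟩ := hmemA a ha
    rw [hσval c hc]
    exact (hprop c hc).1
  have hposA : ∀ a ∈ A, 0 < μ a (σ a) := by
    intro a ha
    obtain ⟨c, hc, rfl⟩ := hmemA a ha
    rw [hσval c hc, ← (hprop c hc).1]
    have := (hprop c hc).2.2.2.1
    have := (hprop c hc).2.2.2.2
    linarith
  have hkey : ∀ a ∈ A, ∀ b ∈ B, tight a b → b = σ a := by
    intro a ha b hb ht
    obtain ⟨c, hc, rfl⟩ := hmemA a ha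
    obtain ⟨c', hc', rfl⟩ := hmemB b hb
    have hadj : Quotient.mk stR (Sum.inl (eC c).1) = Quotient.mk stR (Sum.inr (eC c').2) :=
      Quotient.sound (Relation.ReflTransGen.single (Or.inl ⟨_, _, rfl, rfl, ht⟩))
    have hcc : c = c' := by
      rw [← (hprop c hc).2.1, hadj, (hprop c' hc').2.2.1]
    rw [hσval c hc, hcc]
  -- conclusion
  refine ⟨A, B, σ, hAcard, hBcard, hbij, ?_⟩
  intro M hMsub hMmatch hMne
  have hMA : ∀ m ∈ M, m.1 ∈ A ∧ m.2 ∈ B := by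
    intro m hm
    have := hMsub (Finset.mem_coe.2 hm)
    rw [Set.mem_prod] at this
    exact ⟨Finset.mem_coe.1 this.1, Finset.mem_coe.1 this.2⟩
  have hBsum : ∑ a ∈ A, p.2 (σ a) = ∑ b ∈ B, p.2 b :=
    Finset.sum_nbij σ (fun a ha => Finset.mem_coe.1 (hbij.1 (Finset.mem_coe.2 ha)))
      hbij.2.1 hbij.2.2 (fun a _ => rfl)
  have hWeq : ∑ a ∈ A, μ a (σ a) = (∑ a ∈ A, p.1 a) + ∑ b ∈ B, p.2 b := by
    rw [← hBsum, ← Finset.sum_add_distrib]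
    exact Finset.sum_congr rfl (fun a ha => (htightA a ha).symm)
  have hfstinj : ∀ x ∈ M, ∀ y ∈ M, x.1 = y.1 → x = y := by
    intro x hx y hy hxy
    by_contra h
    exact (hMmatch x hx y hy h).1 hxy
  have hsndinj : ∀ x ∈ M, ∀ y ∈ M, x.2 = y.2 → x = y := by
    intro x hx y hy hxy
    by_contra h
    exact (hMmatch x hx y hy h).2 hxy
  have h1 : ∑ m ∈ M, p.1 m.1 ≤ ∑ a ∈ A, p.1 a := by
    rw [← Finset.sum_image hfstinj]
    refine Finset.sum_le_sum_of_subset_of_nonneg ?_ (fun a _ _ => hppos1 a)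
    intro a ha
    obtain ⟨m, hm, rfl⟩ := Finset.mem_image.1 ha
    exact (hMA m hm).1
  have h2 : ∑ m ∈ M, p.2 m.2 ≤ ∑ b ∈ B, p.2 b := by
    rw [← Finset.sum_image hsndinj]
    refine Finset.sum_le_sum_of_subset_of_nonneg ?_ (fun b _ _ => hppos2 b)
    intro b hb
    obtain ⟨m, hm, rfl⟩ := Finset.mem_image.1 hb
    exact (hMA m hm).2
  by_cases hall : ∀ m ∈ M, p.1 m.1 + p.2 m.2 = μ m.1 m.2
  · have hMsubimg : M ⊆ A.image (fun a => (a, σ a)) := by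
      intro m hm
      have hb := hkey m.1 (hMA m hm).1 m.2 (hMA m hm).2 (hall m hm)
      refine Finset.mem_image.2 ⟨m.1, (hMA m hm).1, ?_⟩
      rw [← hb]
    have hss : M ⊂ A.image (fun a => (a, σ a)) :=
      (Finset.ssubset_iff_subset_ne).2 ⟨hMsubimg, hMne⟩
    obtain ⟨x, hximg, hxM⟩ := Finset.exists_of_ssubset hss
    have himginj : ∀ a ∈ A, ∀ a' ∈ A, (a, σ a) = (a', σ a') → a = a' :=
      fun a _ a' _ h => congrArg Prod.fst h
    calc ∑ m ∈ M, μ m.1 m.2 < ∑ m ∈ A.image (fun a => (a, σ a)), μ m.1 m.2 := by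
          obtain ⟨a0, ha0, rfl⟩ := Finset.mem_image.1 hximg
          exact Finset.sum_lt_sum_of_subset hMsubimg hximg hxM (hposA a0 ha0)
            (fun j _ _ => hμ.1 j.1 j.2)
      _ = ∑ a ∈ A, μ a (σ a) := Finset.sum_image himginj
  · push_neg at hall
    obtain ⟨m₀, hm₀, hne₀⟩ := hall
    calc ∑ m ∈ M, μ m.1 m.2 < ∑ m ∈ M, (p.1 m.1 + p.2 m.2) :=
          Finset.sum_lt_sum (fun m _ => hpmem.1.1 m.1 m.2)
            ⟨m₀, hm₀, lt_of_le_of_ne (hpmem.1.1 m₀.1 m₀.2) (fun h => hne₀ h.symm)⟩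
      _ = (∑ m ∈ M, p.1 m.1) + ∑ m ∈ M, p.2 m.2 := Finset.sum_add_distrib
      _ ≤ (∑ a ∈ A, p.1 a) + ∑ b ∈ B, p.2 b := add_le_add h1 h2
      _ = ∑ a ∈ A, μ a (σ a) := hWeq.symm
end Forward

section Potential
variable {S : Type*} [Fintype S] [DecidableEq S]

/-- weight of a reversed path: `wgtR W [x, y, ...]` sums arcs `y → x` etc. -/
def wgtR (W : S → S → ℝ) : List S → ℝ
  | [] => 0
  | [_] => 0
  | x :: y :: l => W y x + wgtR W (y :: l)

lemma wgtR_cons_cons (W : S → S → ℝ) (x y : S) (l : List S) :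
    wgtR W (x :: y :: l) = W y x + wgtR W (y :: l) := rfl

lemma wgtR_split (W : S → S → ℝ) (c : S) (t : List S) :
    ∀ s : List S, wgtR W (s ++ c :: t) = wgtR W (s ++ [c]) + wgtR W (c :: t) := by
  intro s
  induction s with
  | nil => simp [wgtR]
  | cons x s ih =>
    cases s with
    | nil => simp [wgtR_cons_cons, wgtR]
    | cons y s' =>
      have h1 : (x :: y :: s') ++ c :: t = x :: y :: (s' ++ c :: t) := by simp
      have h2 : (x :: y :: s') ++ [c] = x :: y :: (s' ++ [c]) := by simp
      rw [h1, h2, wgtR_cons_cons, wgtR_cons_cons]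
      have := ih
      simp only [List.cons_append] at this
      rw [this]
      ring

/-- arcs of the cycle closing `z` through exterior vertex `z0`:
path arcs of `z` plus closing arc from `z0` to the last element of `z`. -/
def cyclePairs (z0 : S) : List S → List (S × S)
  | [] => []
  | [x] => [(z0, x)]
  | x :: y :: l => (y, x) :: cyclePairs z0 (y :: l)

lemma cyclePairs_fst (z0 : S) : ∀ z : List S, z ≠ [] →
    (cyclePairs z0 z).map Prod.fst = z.tail ++ [z0] := by
  intro z
  induction z with
  | nil => intro h; exact absurd rfl h
  | cons x l ih =>
    intro _
    cases l with
    | nil => simp [cyclePairs]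
    | cons y l' =>
      simp only [cyclePairs, List.map_cons]
      rw [ih (by simp)]
      simp

lemma cyclePairs_snd (z0 : S) : ∀ z : List S, z ≠ [] →
    (cyclePairs z0 z).map Prod.snd = z := by
  intro z
  induction z with
  | nil => intro h; exact absurd rfl h
  | cons x l ih =>
    intro _
    cases l with
    | nil => simp [cyclePairs]
    | cons y l' =>
      simp only [cyclePairs, List.map_cons]
      rw [ih (by simp)]

lemma cyclePairs_weight (W : S → S → ℝ) (z0 : S) : ∀ (z : List S) (h : z ≠ []),
    ((cyclePairs z0 z).map (fun ut => W ut.1 ut.2)).sum = wgtR W z + W z0 (z.getLast h) := by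
  intro z
  induction z with
  | nil => intro h; exact absurd rfl h
  | cons x l ih =>
    intro _
    cases l with
    | nil => simp [cyclePairs, wgtR]
    | cons y l' =>
      simp only [cyclePairs, List.map_cons, List.sum_cons]
      rw [ih (by simp), wgtR_cons_cons]
      have : (x :: y :: l').getLast (by simp) = (y :: l').getLast (by simp) := by
        rw [List.getLast_cons]
      rw [this]
      ring

/-- existence of potentials when all simple cycles are strictly negative -/
lemma exists_potential (B : Finset S) (W : S → S → ℝ)
    (hcyc : ∀ (z0 : S) (zm : List S) (h : zm ≠ []), (z0 :: zm).Nodup →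
      z0 ∈ B → (∀ x ∈ zm, x ∈ B) →
      wgtR W (z0 :: zm) + W z0 (zm.getLast h) < 0) :
    ∃ v : S → ℝ, ∀ b ∈ B, ∀ b' ∈ B, b' ≠ b → v b + W b b' ≤ v b' := by
  classical
  -- the finset of admissible paths ending (head) at b
  set Paths : S → Finset {l : List S // l.Nodup} := fun b =>
    Finset.univ.filter (fun l => l.1.head? = some b ∧ ∀ x ∈ l.1, x ∈ B) with hPaths
  have hne : ∀ b ∈ B, (Paths b).Nonempty := by
    intro b hb
    exact ⟨⟨[b], List.nodup_singleton b⟩, by simp [hPaths, hb]⟩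
  set v : S → ℝ := fun b => if hb : b ∈ B then (Paths b).sup' (hne b hb) (fun l => wgtR W l.1)
    else 0 with hv
  have hvge : ∀ b (hb : b ∈ B), ∀ (l : List S) (hl : l.Nodup),
      l.head? = some b → (∀ x ∈ l, x ∈ B) → wgtR W l ≤ v b := by
    intro b hb l hl hhead hmem
    rw [hv]
    simp only [dif_pos hb]
    have hm : (⟨l, hl⟩ : {l : List S // l.Nodup}) ∈ Paths b := by
      rw [hPaths]
      exact Finset.mem_filter.2 ⟨Finset.mem_univ _, hhead, hmem⟩
    exact Finset.le_sup' (fun l : {l : List S // l.Nodup} => wgtR W l.1) hm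
  refine ⟨v, fun b hb b' hb' hne' => ?_⟩
  -- choose an optimal path for b
  have hvb : v b = (Paths b).sup' (hne b hb) (fun l => wgtR W l.1) := by
    rw [hv]; simp only [dif_pos hb]
  obtain ⟨l, hlmem, hleq⟩ := Finset.exists_mem_eq_sup' (hne b hb) (fun l => wgtR W l.1)
  rw [hPaths] at hlmem
  simp only [Finset.mem_filter] at hlmem
  obtain ⟨-, hlhead, hlB⟩ := hlmem
  -- l.1 = b :: tl
  obtain ⟨tl, hltl⟩ : ∃ tl, l.1 = b :: tl := by
    cases hl1 : l.1 with
    | nil => rw [hl1] at hlhead; simp at hlhead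
    | cons a tl =>
      rw [hl1] at hlhead
      simp at hlhead
      exact ⟨tl, by rw [hlhead]⟩
  have hvbl : v b = wgtR W l.1 := by rw [hvb, hleq]
  by_cases hmem : b' ∈ l.1
  · -- split l at b'
    obtain ⟨s, t, hst⟩ := List.append_of_mem hmem
    -- s is nonempty since head l = b ≠ b'
    obtain ⟨x, s', hs⟩ : ∃ x s', s = x :: s' := by
      cases hscases : s with
      | nil =>
        rw [hscases] at hst
        simp at hst
        rw [hst] at hltl
        simp at hltl
        exact absurd hltl.1 hne'
      | cons x s' => exact ⟨x, s', rfl⟩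
    have hx : x = b := by
      have : l.1.head? = some x := by rw [hst, hs]; simp
      rw [hlhead] at this
      exact (Option.some_injective _ this).symm
    -- the candidate path for b'
    have hsubl : (b' :: t).Sublist l.1 := by
      rw [hst]
      have h1 : (b' :: t).Sublist (s ++ b' :: t) := List.sublist_append_right s (b' :: t)
      exact h1
    have hnodup' : (b' :: t).Nodup := hsubl.nodup l.2
    have hcand : wgtR W (b' :: t) ≤ v b' :=
      hvge b' hb' (b' :: t) hnodup' (by simp) (fun x hx => hlB x (hsubl.mem hx))
    -- the cycle
    have hcycsub : (s ++ [b']).Sublist l.1 := by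
      rw [hst]
      exact (List.append_sublist_append_left s).2 (List.cons_sublist_cons.2 (List.nil_sublist t))
    have hcycnd : (s ++ [b']).Nodup := hcycsub.nodup l.2
    have hcyc1 : wgtR W (s ++ [b']) + W b b' < 0 := by
      have hform : s ++ [b'] = b :: (s' ++ [b']) := by rw [hs, hx]; simp
      have hgl : (s' ++ [b']).getLast (by simp) = b' := List.getLast_append _
      have := hcyc b (s' ++ [b']) (by simp) (by rw [← hform]; exact hcycnd) hb
        (fun y hy => by
          apply hlB
          apply hcycsub.mem
          rw [hform]
          exact List.mem_cons_of_mem _ hy)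
      rw [hgl] at this
      rw [hform]
      exact this
    have hsplit : wgtR W l.1 = wgtR W (s ++ [b']) + wgtR W (b' :: t) := by
      rw [hst]; exact wgtR_split W b' t s
    -- combine
    have : v b + W b b' = wgtR W (s ++ [b']) + W b b' + wgtR W (b' :: t) := by
      rw [hvbl, hsplit]; ring
    rw [this]
    have h0 : wgtR W (s ++ [b']) + W b b' < 0 := hcyc1
    linarith
  · -- extend l by b'
    have hnodup' : (b' :: l.1).Nodup := List.nodup_cons.2 ⟨hmem, l.2⟩
    have hcand : wgtR W (b' :: l.1) ≤ v b' :=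
      hvge b' hb' _ hnodup' (by simp) (by
        intro x hx
        rcases List.mem_cons.1 hx with rfl | hx'
        · exact hb'
        · exact hlB x hx')
    have hwext : wgtR W (b' :: l.1) = W b b' + wgtR W l.1 := by
      rw [hltl, wgtR_cons_cons]
    rw [hvbl]
    linarith
end Potential

section Dual
variable {S : Type*} [Fintype S] [DecidableEq S]

lemma list_sum_sub_add {α : Type*} (l : List α) (f g : α → ℝ) (δ : ℝ) :
    (l.map (fun q => f q - g q + δ)).sum = (l.map f).sum - (l.map g).sum + l.length * δ := by
  induction l with
  | nil => simp
  | cons a l ih => simp only [List.map_cons, List.sum_cons, List.length_cons, ih]; push_cast; ring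

lemma exists_strict_dual (μ : S → S → ℝ) (hμ : DirDist μ) (n : ℕ) (hn : 0 < n)
    (A B : Finset S) (σ : S → S) (hA : A.card = n) (hB : B.card = n)
    (hbij : Set.BijOn σ ↑A ↑B)
    (huniq : ∀ M : Finset (S × S), ↑M ⊆ (↑A ×ˢ ↑B : Set (S × S)) →
        (∀ p ∈ M, ∀ q ∈ M, p ≠ q → p.1 ≠ q.1 ∧ p.2 ≠ q.2) →
        M ≠ A.image (fun a => (a, σ a)) →
        ∑ p ∈ M, μ p.1 p.2 < ∑ a ∈ A, μ a (σ a)) :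
    ∃ (u v : S → ℝ) (δ : ℝ), 0 < δ ∧
      (∀ a ∈ A, 0 < u a) ∧ (∀ b ∈ B, 0 < v b) ∧
      (∀ a ∈ A, u a + v (σ a) = μ a (σ a)) ∧
      (∀ a ∈ A, ∀ b ∈ B, b ≠ σ a → μ a b + δ ≤ u a + v b) := by
  classical
  have hAne : A.Nonempty := Finset.card_pos.1 (hA ▸ hn)
  have hBne : B.Nonempty := Finset.card_pos.1 (hB ▸ hn)
  -- inverse of σ
  have hτex : ∀ b : S, ∃ a, b ∈ B → (a ∈ A ∧ σ a = b) := by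
    intro b
    by_cases hb : b ∈ B
    · obtain ⟨a, ha, hab⟩ := hbij.2.2 hb
      exact ⟨a, fun _ => ⟨ha, hab⟩⟩
    · exact ⟨hAne.choose, fun h => absurd h hb⟩
  choose τ hτ using hτex
  have hτA : ∀ b ∈ B, τ b ∈ A := fun b hb => (hτ b hb).1
  have hστ : ∀ b ∈ B, σ (τ b) = b := fun b hb => (hτ b hb).2
  have hτσ : ∀ a ∈ A, τ (σ a) = a := by
    intro a ha
    have hσa : σ a ∈ B := hbij.1 ha
    exact hbij.2.1 (Finset.mem_coe.2 (hτA _ hσa)) (Finset.mem_coe.2 ha) (hστ _ hσa)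
  have hτinj : ∀ b ∈ B, ∀ b' ∈ B, τ b = τ b' → b = b' := by
    intro b hb b' hb' h
    rw [← hστ b hb, ← hστ b' hb', h]
  set Wt : ℝ := ∑ a ∈ A, μ a (σ a) with hWt
  set σM : Finset (S × S) := A.image (fun a => (a, σ a)) with hσM
  have hσMne : σM.Nonempty := hAne.image _
  -- the set of all valid matchings other than σM
  set Mall : Finset (Finset (S × S)) := (A ×ˢ B).powerset.filter
    (fun M => (∀ p ∈ M, ∀ q ∈ M, p ≠ q → p.1 ≠ q.1 ∧ p.2 ≠ q.2) ∧ M ≠ σM) with hMall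
  have hMallmem : ∀ M, M ∈ Mall ↔ (M ⊆ A ×ˢ B ∧
      (∀ p ∈ M, ∀ q ∈ M, p ≠ q → p.1 ≠ q.1 ∧ p.2 ≠ q.2) ∧ M ≠ σM) := by
    intro M
    rw [hMall, Finset.mem_filter, Finset.mem_powerset]
  have hMallne : Mall.Nonempty := by
    refine ⟨∅, (hMallmem ∅).2 ⟨Finset.empty_subset _, fun p hp => absurd hp (Finset.notMem_empty p), ?_⟩⟩
    exact fun h => hσMne.ne_empty h.symm
  have hlt : ∀ M ∈ Mall, ∑ p ∈ M, μ p.1 p.2 < Wt := by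
    intro M hM
    rw [hMallmem] at hM
    refine huniq M ?_ hM.2.1 hM.2.2
    intro x hx
    have := hM.1 (Finset.mem_coe.1 hx)
    rw [Finset.mem_product] at this
    exact Set.mem_prod.2 ⟨Finset.mem_coe.2 this.1, Finset.mem_coe.2 this.2⟩
  set ε : ℝ := Mall.inf' hMallne (fun M => Wt - ∑ p ∈ M, μ p.1 p.2) with hε
  have hεpos : 0 < ε := by
    rw [hε, Finset.lt_inf'_iff]
    intro M hM
    linarith [hlt M hM]
  have hεle : ∀ M ∈ Mall, ∑ p ∈ M, μ p.1 p.2 ≤ Wt - ε := by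
    intro M hM
    have := Finset.inf'_le (fun M => Wt - ∑ p ∈ M, μ p.1 p.2) hM
    rw [← hε] at this
    linarith
  -- diagonal weights are positive
  have hdiag : ∀ a ∈ A, 0 < μ a (σ a) := by
    intro a ha
    set M : Finset (S × S) := (A.erase a).image (fun a => (a, σ a)) with hM
    have hMinj : ∀ x ∈ A.erase a, ∀ y ∈ A.erase a, (x, σ x) = (y, σ y) → x = y :=
      fun x _ y _ h => congrArg Prod.fst h
    have hMcard : M.card = n - 1 := by
      rw [hM, Finset.card_image_of_injOn (fun x hx y hy h => hMinj x hx y hy h),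
        Finset.card_erase_of_mem ha, hA]
    have hMmem : M ∈ Mall := by
      rw [hMallmem]
      refine ⟨?_, ?_, ?_⟩
      · intro x hx
        obtain ⟨a', ha', rfl⟩ := Finset.mem_image.1 hx
        have haA : a' ∈ A := Finset.mem_of_mem_erase ha'
        exact Finset.mem_product.2 ⟨haA, hbij.1 haA⟩
      · intro x hx y hy hxy
        obtain ⟨a', ha', rfl⟩ := Finset.mem_image.1 hx
        obtain ⟨a'', ha'', rfl⟩ := Finset.mem_image.1 hy
        constructor
        · intro h
          exact hxy (by simp only at h; rw [h])
        · intro h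
          simp only at h
          have := hbij.2.1 (Finset.mem_coe.2 (Finset.mem_of_mem_erase ha'))
            (Finset.mem_coe.2 (Finset.mem_of_mem_erase ha'')) h
          exact hxy (by rw [this])
      · intro h
        have : M.card = σM.card := by rw [h]
        rw [hMcard, hσM, Finset.card_image_of_injOn
          (fun x _ y _ h => congrArg Prod.fst h), hA] at this
        omega
    have hsum : ∑ p ∈ M, μ p.1 p.2 = Wt - μ a (σ a) := by
      rw [hM, Finset.sum_image hMinj]
      have := Finset.sum_erase_add A (fun a => μ a (σ a)) ha
      rw [hWt]
      linarith [this]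
    have := hεle M hMmem
    rw [hsum] at this
    linarith
  set δ : ℝ := ε / (2 * n) with hδ
  have hδpos : 0 < δ := by
    rw [hδ]
    have : (0:ℝ) < n := by exact_mod_cast hn
    positivity
  set W' : S → S → ℝ := fun b b' => μ (τ b) b' - μ (τ b) b + δ with hW'
  -- all simple cycles are negative
  have hcyc : ∀ (z0 : S) (zm : List S) (h : zm ≠ []), (z0 :: zm).Nodup →
      z0 ∈ B → (∀ x ∈ zm, x ∈ B) →
      wgtR W' (z0 :: zm) + W' z0 (zm.getLast h) < 0 := by
    intro z0 zm hzm hnd hz0B hzmB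
    set z : List S := z0 :: zm with hz
    have hzne : z ≠ [] := by simp [hz]
    have hzB : ∀ x ∈ z, x ∈ B := by
      intro x hx
      rcases List.mem_cons.1 hx with rfl | hx'
      · exact hz0B
      · exact hzmB x hx'
    have hfst := cyclePairs_fst z0 z hzne
    have hsnd := cyclePairs_snd z0 z hzne
    have hztail : z.tail = zm := rfl
    -- membership facts
    have hcp1 : ∀ q ∈ cyclePairs z0 z, q.1 ∈ z := by
      intro q hq
      have : q.1 ∈ (cyclePairs z0 z).map Prod.fst := List.mem_map_of_mem hq
      rw [hfst, hztail] at this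
      rcases List.mem_append.1 this with h' | h'
      · exact List.mem_cons_of_mem _ h'
      · simp at h'
        rw [h']
        exact List.mem_cons_self
    have hcp2 : ∀ q ∈ cyclePairs z0 z, q.2 ∈ z := by
      intro q hq
      have : q.2 ∈ (cyclePairs z0 z).map Prod.snd := List.mem_map_of_mem hq
      rw [hsnd] at this
      exact this
    -- the cyclic part of the matching
    set cycList : List (S × S) := (cyclePairs z0 z).map (fun ut => (τ ut.1, ut.2)) with hcycList
    have hcycfst : cycList.map Prod.fst = (zm ++ [z0]).map τ := by
      rw [hcycList, List.map_map]
      have h1 : (Prod.fst ∘ fun ut : S × S => (τ ut.1, ut.2)) = τ ∘ Prod.fst := rfl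
      rw [h1, ← List.map_map, hfst, hztail]
    have hcycsnd : cycList.map Prod.snd = z := by
      rw [hcycList, List.map_map]
      have h1 : (Prod.snd ∘ fun ut : S × S => (τ ut.1, ut.2)) = (Prod.snd : S × S → S) := rfl
      rw [h1, hsnd]
    have hzmz0nd : (zm ++ [z0]).Nodup := by
      have : (zm ++ [z0]).Perm (z0 :: zm) := List.perm_append_singleton z0 zm
      exact this.nodup_iff.2 hnd
    have hzmz0B : ∀ x ∈ zm ++ [z0], x ∈ B := by
      intro x hx
      rcases List.mem_append.1 hx with h' | h'
      · exact hzmB x h'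
      · simp at h'; rw [h']; exact hz0B
    have hcycfstnd : (cycList.map Prod.fst).Nodup := by
      rw [hcycfst]
      exact List.Nodup.map_on (fun x hx y hy h => hτinj x (hzmz0B x hx) y (hzmz0B y hy) h) hzmz0nd
    have hcycsndnd : (cycList.map Prod.snd).Nodup := by rw [hcycsnd]; exact hnd
    have hcycnd : cycList.Nodup := List.Nodup.of_map Prod.fst hcycfstnd
    -- full matching
    set fixF : Finset S := A.filter (fun a => σ a ∉ z) with hfixF
    set fixM : Finset (S × S) := fixF.image (fun a => (a, σ a)) with hfixM
    set M' : Finset (S × S) := cycList.toFinset ∪ fixM with hM'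
    -- membership characterizations
    have hcycmem : ∀ q, q ∈ cycList.toFinset ↔ ∃ ut ∈ cyclePairs z0 z, (τ ut.1, ut.2) = q := by
      intro q
      rw [List.mem_toFinset, hcycList, List.mem_map]
    have hfixmem : ∀ q, q ∈ fixM ↔ ∃ a ∈ A, σ a ∉ z ∧ (a, σ a) = q := by
      intro q
      rw [hfixM, Finset.mem_image]
      constructor
      · rintro ⟨a, ha, rfl⟩
        rw [hfixF, Finset.mem_filter] at ha
        exact ⟨a, ha.1, ha.2, rfl⟩
      · rintro ⟨a, ha, hz, rfl⟩
        exact ⟨a, by rw [hfixF, Finset.mem_filter]; exact ⟨ha, hz⟩, rfl⟩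
    have hcycfacts : ∀ q ∈ cycList.toFinset, q.1 ∈ A ∧ q.2 ∈ B ∧ σ q.1 ∈ z := by
      intro q hq
      obtain ⟨ut, hut, rfl⟩ := (hcycmem q).1 hq
      have hu := hcp1 ut hut
      have ht := hcp2 ut hut
      exact ⟨hτA _ (hzB _ hu), hzB _ ht, by rw [hστ _ (hzB _ hu)]; exact hu⟩
    have hdisj : Disjoint cycList.toFinset fixM := by
      rw [Finset.disjoint_left]
      intro q hq hq2
      obtain ⟨a, _, hnz, hq2e⟩ := (hfixmem q).1 hq2
      apply hnz
      obtain ⟨ut, hut, hq1⟩ := (hcycmem q).1 hq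
      have hq2z : q.2 ∈ z := by rw [← hq1]; exact hcp2 ut hut
      rw [← hq2e] at hq2z
      exact hq2z
    have hcycinj := List.inj_on_of_nodup_map hcycfstnd
    have hcycinj2 := List.inj_on_of_nodup_map hcycsndnd
    have hM'mem : M' ∈ Mall := by
      rw [hMallmem]
      refine ⟨?_, ?_, ?_⟩
      · intro q hq
        rcases Finset.mem_union.1 hq with h' | h'
        · have := hcycfacts q h'
          exact Finset.mem_product.2 ⟨this.1, this.2.1⟩
        · obtain ⟨a, haA, hnz, rfl⟩ := (hfixmem q).1 h'
          exact Finset.mem_product.2 ⟨haA, hbij.1 haA⟩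
      · intro q hq q' hq' hqq
        rcases Finset.mem_union.1 hq with h1 | h1 <;> rcases Finset.mem_union.1 hq' with h2 | h2
        · constructor
          · intro h
            exact hqq (hcycinj (List.mem_toFinset.1 h1) (List.mem_toFinset.1 h2) h)
          · intro h
            exact hqq (hcycinj2 (List.mem_toFinset.1 h1) (List.mem_toFinset.1 h2) h)
        · obtain ⟨a, haA, hnz, hqe⟩ := (hfixmem q').1 h2
          constructor
          · intro h
            apply hnz
            have := (hcycfacts q h1).2.2
            rw [h, ← hqe] at this
            simp only at this
            exact this
          · intro h
            apply hnz
            have hq2z : q.2 ∈ z := by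
              obtain ⟨ut, hut, hq1⟩ := (hcycmem q).1 h1
              rw [← hq1]; exact hcp2 ut hut
            rw [h, ← hqe] at hq2z
            simp only at hq2z
            exact hq2z
        · obtain ⟨a, haA, hnz, hqe⟩ := (hfixmem q).1 h1
          constructor
          · intro h
            apply hnz
            have := (hcycfacts q' h2).2.2
            rw [← h, ← hqe] at this
            simp only at this
            exact this
          · intro h
            apply hnz
            have hq2z : q'.2 ∈ z := by
              obtain ⟨ut, hut, hq1⟩ := (hcycmem q').1 h2
              rw [← hq1]; exact hcp2 ut hut
            rw [← h, ← hqe] at hq2z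
            simp only at hq2z
            exact hq2z
        · obtain ⟨a, haA, hnz, hqe⟩ := (hfixmem q).1 h1
          obtain ⟨a', haA', hnz', hqe'⟩ := (hfixmem q').1 h2
          constructor
          · intro h
            apply hqq
            rw [← hqe, ← hqe'] at h ⊢
            simp only at h
            rw [h]
          · intro h
            apply hqq
            rw [← hqe, ← hqe'] at h ⊢
            simp only at h
            have := hbij.2.1 (Finset.mem_coe.2 haA) (Finset.mem_coe.2 haA') h
            rw [this]
      · -- M' ≠ σM
        obtain ⟨y, rest, rfl⟩ : ∃ y rest, zm = y :: rest := by
          cases zm with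
          | nil => exact absurd rfl hzm
          | cons y rest => exact ⟨y, rest, rfl⟩
        have hyB : y ∈ B := hzmB y (List.mem_cons_self)
        have hhd : (y, z0) ∈ cyclePairs z0 z := by
          have : cyclePairs z0 (z0 :: y :: rest) = (y, z0) :: cyclePairs z0 (y :: rest) := rfl
          rw [hz, this]
          exact List.mem_cons_self
        have hq0 : (τ y, z0) ∈ M' := by
          apply Finset.mem_union_left
          rw [hcycmem]
          exact ⟨(y, z0), hhd, rfl⟩
        intro hMeq
        rw [hMeq, hσM] at hq0
        obtain ⟨a, haA, hae⟩ := Finset.mem_image.1 hq0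
        have h1 : a = τ y := congrArg Prod.fst hae
        have h2 : σ a = z0 := congrArg Prod.snd hae
        rw [h1, hστ y hyB] at h2
        have : z0 ∉ (y :: rest) := (List.nodup_cons.1 hnd).1
        rw [← h2] at this
        exact this (List.mem_cons_self)
    -- sum computations
    have hsumM' : ∑ p ∈ M', μ p.1 p.2
        = ((cyclePairs z0 z).map (fun ut => μ (τ ut.1) ut.2)).sum + ∑ a ∈ fixF, μ a (σ a) := by
      rw [hM', Finset.sum_union hdisj]
      congr 1
      · rw [List.sum_toFinset _ hcycnd, hcycList, List.map_map]
        rfl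
      · rw [hfixM, Finset.sum_image (fun x _ y _ h => congrArg Prod.fst h)]
    have hWtsplit : ∑ a ∈ A.filter (fun a => σ a ∈ z), μ a (σ a) + ∑ a ∈ fixF, μ a (σ a) = Wt := by
      rw [hWt, hfixF]
      exact Finset.sum_filter_add_sum_filter_not A _ _
    have hdiagsum : ∑ a ∈ A.filter (fun a => σ a ∈ z), μ a (σ a)
        = ((cyclePairs z0 z).map (fun ut => μ (τ ut.1) ut.1)).sum := by
      have h1 : ((cyclePairs z0 z).map (fun ut => μ (τ ut.1) ut.1))
          = ((cyclePairs z0 z).map Prod.fst).map (fun u => μ (τ u) u) := by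
        rw [List.map_map]; rfl
      have h2 : ((zm ++ [z0]).map (fun u => μ (τ u) u)).sum
          = ((z0 :: zm).map (fun u => μ (τ u) u)).sum :=
        List.Perm.sum_eq (List.Perm.map _ (List.perm_append_singleton z0 zm))
      have h3 : ((z0 :: zm).map (fun u => μ (τ u) u)).sum = ∑ u ∈ z.toFinset, μ (τ u) u :=
        (List.sum_toFinset _ hnd).symm
      rw [h1, hfst, hztail, h2, hz, h3]
      refine Finset.sum_nbij σ ?_ ?_ ?_ ?_
      · intro a ha
        rw [Finset.mem_filter] at ha
        exact List.mem_toFinset.2 ha.2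
      · intro a ha a' ha' h
        simp only [Finset.coe_filter, Set.mem_setOf_eq] at ha ha'
        exact hbij.2.1 (Finset.mem_coe.2 ha.1) (Finset.mem_coe.2 ha'.1) h
      · intro uu huu
        rw [Finset.coe_filter]
        have huz : uu ∈ z := List.mem_toFinset.1 huu
        have huB : uu ∈ B := hzB _ huz
        refine ⟨τ uu, ⟨hτA _ huB, by rw [hστ _ huB]; exact huz⟩, hστ _ huB⟩
      · intro a ha
        rw [Finset.mem_filter] at ha
        rw [hτσ a ha.1]
    have hgl : z.getLast hzne = zm.getLast hzm := List.getLast_cons hzm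
    have hlen : (cyclePairs z0 z).length = z.length := by
      have := congrArg List.length hsnd
      rw [List.length_map] at this
      exact this
    have hwgt : wgtR W' z + W' z0 (zm.getLast hzm)
        = ((cyclePairs z0 z).map (fun ut => μ (τ ut.1) ut.2)).sum
          - ((cyclePairs z0 z).map (fun ut => μ (τ ut.1) ut.1)).sum + z.length * δ := by
      rw [← hgl, ← cyclePairs_weight W' z0 z hzne]
      have hWform : (fun ut : S × S => W' ut.1 ut.2)
          = fun ut : S × S => (fun q : S × S => μ (τ q.1) q.2) ut - (fun q : S × S => μ (τ q.1) q.1) ut + δ := rfl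
      rw [hWform, list_sum_sub_add, hlen]
    have hlenle : z.length ≤ n := by
      have h1 : z.toFinset.card = z.length := List.toFinset_card_of_nodup hnd
      have h2 : z.toFinset ⊆ B := fun x hx => hzB x (List.mem_toFinset.1 hx)
      calc z.length = z.toFinset.card := h1.symm
        _ ≤ B.card := Finset.card_le_card h2
        _ = n := hB
    have hfin : ∑ p ∈ M', μ p.1 p.2 ≤ Wt - ε := hεle M' hM'mem
    have hld : (z.length : ℝ) * δ ≤ n * δ := by
      apply mul_le_mul_of_nonneg_right _ (le_of_lt hδpos)
      exact_mod_cast hlenle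
    have hnδ : (n:ℝ) * δ = ε / 2 := by
      rw [hδ]
      have hn0 : (n:ℝ) ≠ 0 := by positivity
      field_simp
    have hwz : wgtR W' (z0 :: zm) = wgtR W' z := rfl
    rw [hwz, hwgt]
    linarith [hsumM', hWtsplit, hdiagsum, hfin]
  -- potentials
  obtain ⟨v₀, hv₀⟩ := exists_potential B W' hcyc
  have hdiagB : ∀ b ∈ B, 0 < μ (τ b) b := by
    intro b hb
    have := hdiag (τ b) (hτA b hb)
    rwa [hστ b hb] at this
  have hupper : ∀ b ∈ B, ∀ b' ∈ B, v₀ b' - v₀ b < μ (τ b') b' := by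
    intro b hb b' hb'
    by_cases hbb : b = b'
    · subst hbb
      have := hdiagB b hb
      linarith
    · have hrel := hv₀ b' hb' b hb hbb
      have hWval : W' b' b = μ (τ b') b - μ (τ b') b' + δ := rfl
      have hμnn := hμ.1 (τ b') b
      rw [hWval] at hrel
      linarith
  set lmax := B.sup' hBne (fun b => -v₀ b) with hlmax
  set rmin := B.inf' hBne (fun b' => μ (τ b') b' - v₀ b') with hrmin
  have hlr : lmax < rmin := by
    rw [hlmax, Finset.sup'_lt_iff]
    intro b hb
    rw [hrmin, Finset.lt_inf'_iff]
    intro b' hb'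
    have := hupper b hb b' hb'
    linarith
  set c : ℝ := (lmax + rmin)/2 with hcdef
  have hc1 : lmax < c := by rw [hcdef]; linarith
  have hc2 : c < rmin := by rw [hcdef]; linarith
  refine ⟨fun a => μ a (σ a) - (v₀ (σ a) + c), fun b => v₀ b + c, δ, hδpos, ?_, ?_, ?_, ?_⟩
  · intro a ha
    have hσa : σ a ∈ B := hbij.1 ha
    have h1 : rmin ≤ μ (τ (σ a)) (σ a) - v₀ (σ a) := by
      rw [hrmin]
      exact Finset.inf'_le _ hσa
    rw [hτσ a ha] at h1
    simp only
    linarith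
  · intro b hb
    have h1 : -v₀ b ≤ lmax := by
      rw [hlmax]
      exact Finset.le_sup' (fun x => -v₀ x) hb
    simp only
    linarith
  · intro a ha
    simp only
    ring
  · intro a ha b hb hne2
    have hσa : σ a ∈ B := hbij.1 ha
    have hrel := hv₀ (σ a) hσa b hb hne2
    have hWval : W' (σ a) b = μ (τ (σ a)) b - μ (τ (σ a)) (σ a) + δ := rfl
    rw [hWval, hτσ a ha] at hrel
    simp only
    linarith
end Dual

section Backward
variable {S : Type*} [Fintype S] [Nonempty S] [DecidableEq S]

lemma backward (μ : S → S → ℝ) (hμ : DirDist μ) (n : ℕ) (hn : 0 < n)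
    (A B : Finset S) (σ : S → S) (hA : A.card = n) (hB : B.card = n)
    (hbij : Set.BijOn σ ↑A ↑B)
    (huniq : ∀ M : Finset (S × S), ↑M ⊆ (↑A ×ˢ ↑B : Set (S × S)) →
        (∀ p ∈ M, ∀ q ∈ M, p ≠ q → p.1 ≠ q.1 ∧ p.2 ≠ q.2) →
        M ≠ A.image (fun a => (a, σ a)) →
        ∑ p ∈ M, μ p.1 p.2 < ∑ a ∈ A, μ a (σ a)) :
    ∃ f : Fin (n + 1) → Pt S, AffineIndependent ℝ f ∧
      convexHull ℝ (Set.range f) ⊆ TT μ := by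
  classical
  obtain ⟨u, v, δ, hδpos, hu, hv, heq, hmarg⟩ :=
    exists_strict_dual μ hμ n hn A B σ hA hB hbij huniq
  have hAne : A.Nonempty := Finset.card_pos.1 (hA ▸ hn)
  have hBne : B.Nonempty := Finset.card_pos.1 (hB ▸ hn)
  have hτex : ∀ b : S, ∃ a, b ∈ B → (a ∈ A ∧ σ a = b) := by
    intro b
    by_cases hb : b ∈ B
    · obtain ⟨a, ha, hab⟩ := hbij.2.2 hb
      exact ⟨a, fun _ => ⟨ha, hab⟩⟩
    · exact ⟨hAne.choose, fun h => absurd h hb⟩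
  choose τ hτ using hτex
  have hτA : ∀ b ∈ B, τ b ∈ A := fun b hb => (hτ b hb).1
  have hστ : ∀ b ∈ B, σ (τ b) = b := fun b hb => (hτ b hb).2
  have hτσ : ∀ a ∈ A, τ (σ a) = a := by
    intro a ha
    have hσa : σ a ∈ B := hbij.1 ha
    exact hbij.2.1 (Finset.mem_coe.2 (hτA _ hσa)) (Finset.mem_coe.2 ha) (hστ _ hσa)
  set ε₀ : ℝ := min (δ/2) (min ((B.inf' hBne v)/2) ((A.inf' hAne u)/2)) with hε₀
  have hε₀pos : 0 < ε₀ := by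
    rw [hε₀]
    refine lt_min (by linarith) (lt_min ?_ ?_)
    · have : 0 < B.inf' hBne v := by
        rw [Finset.lt_inf'_iff]
        exact fun b hb => hv b hb
      linarith
    · have : 0 < A.inf' hAne u := by
        rw [Finset.lt_inf'_iff]
        exact fun a ha => hu a ha
      linarith
  have hε₀δ : ε₀ ≤ δ/2 := min_le_left _ _
  have hε₀v : ∀ b ∈ B, ε₀ ≤ v b / 2 := by
    intro b hb
    have h1 : ε₀ ≤ (B.inf' hBne v)/2 := le_trans (min_le_right _ _) (min_le_left _ _)
    have h2 : B.inf' hBne v ≤ v b := Finset.inf'_le _ hb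
    linarith
  have hε₀u : ∀ a ∈ A, ε₀ ≤ u a / 2 := by
    intro a ha
    have h1 : ε₀ ≤ (A.inf' hAne u)/2 := le_trans (min_le_right _ _) (min_le_right _ _)
    have h2 : A.inf' hAne u ≤ u a := Finset.inf'_le _ ha
    linarith
  set Pr : (S → ℝ) → S → ℝ :=
    fun x t => max 0 (A.sup' hAne (fun a => μ a t - u a - x a)) with hPrdef
  set Pc : (S → ℝ) → S → ℝ :=
    fun x s => max 0 (Finset.univ.sup' Finset.univ_nonempty (fun t => μ s t - Pr x t)) with hPcdef
  set P : (S → ℝ) → Pt S := fun x => (Pc x, Pr x) with hPdef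
  -- basic bounds
  have hPrge : ∀ x t, ∀ a ∈ A, μ a t - u a - x a ≤ Pr x t := by
    intro x t a ha
    rw [hPrdef]
    exact le_trans (Finset.le_sup' (fun a => μ a t - u a - x a) ha) (le_max_right _ _)
  have hPcge : ∀ x s t, μ s t - Pr x t ≤ Pc x s := by
    intro x s t
    rw [hPcdef]
    exact le_trans (Finset.le_sup' (fun t => μ s t - Pr x t) (Finset.mem_univ t)) (le_max_right _ _)
  -- Claim 1
  have hC1 : ∀ x : S → ℝ, (∀ a ∈ A, |x a| ≤ ε₀) → ∀ b ∈ B, Pr x b = v b - x (τ b) := by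
    intro x hx b hb
    have ha₀ : τ b ∈ A := hτA b hb
    have hστb : σ (τ b) = b := hστ b hb
    have heq₀ : u (τ b) + v b = μ (τ b) b := by
      have := heq (τ b) ha₀
      rwa [hστb] at this
    have hub : ∀ a ∈ A, μ a b - u a - x a ≤ v b - x (τ b) := by
      intro a ha
      by_cases hab : a = τ b
      · subst hab
        linarith
      · have hbσ : b ≠ σ a := by
          intro hcc
          apply hab
          rw [hcc] at hb ⊢
          exact (hτσ a ha).symm
        have := hmarg a ha b hb hbσ
        have hxa := (abs_le.1 (hx a ha)).1
        have hxτ := (abs_le.1 (hx (τ b) ha₀)).2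
        linarith
    have hsup : A.sup' hAne (fun a => μ a b - u a - x a) = v b - x (τ b) := by
      apply le_antisymm
      · rw [Finset.sup'_le_iff]
        exact hub
      · have : μ (τ b) b - u (τ b) - x (τ b) = v b - x (τ b) := by linarith
        rw [← this]
        exact Finset.le_sup' (fun a => μ a b - u a - x a) ha₀
    rw [hPrdef]
    simp only
    rw [hsup, max_eq_right]
    have hxτ := (abs_le.1 (hx (τ b) ha₀)).2
    have := hε₀v b hb
    have := hv b hb
    linarith
  -- Claim 2
  have hC2 : ∀ x : S → ℝ, (∀ a ∈ A, |x a| ≤ ε₀) → ∀ a ∈ A, Pc x a = u a + x a := by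
    intro x hx a ha
    have hσa : σ a ∈ B := hbij.1 ha
    have hub : ∀ t, μ a t - Pr x t ≤ u a + x a := by
      intro t
      have := hPrge x t a ha
      linarith
    have hat : μ a (σ a) - Pr x (σ a) = u a + x a := by
      rw [hC1 x hx (σ a) hσa, hτσ a ha]
      have := heq a ha
      linarith
    have hsup : Finset.univ.sup' Finset.univ_nonempty (fun t => μ a t - Pr x t) = u a + x a := by
      apply le_antisymm
      · rw [Finset.sup'_le_iff]
        exact fun t _ => hub t
      · rw [← hat]
        exact Finset.le_sup' (fun t => μ a t - Pr x t) (Finset.mem_univ (σ a))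
    rw [hPcdef]
    simp only
    rw [hsup, max_eq_right]
    have hxa := (abs_le.1 (hx a ha)).1
    have := hε₀u a ha
    have := hu a ha
    linarith
  -- membership in the tight span
  have hmem : ∀ x : S → ℝ, (∀ a ∈ A, |x a| ≤ ε₀) → P x ∈ TT μ := by
    intro x hx
    rw [mem_TT_iff]
    refine ⟨⟨?_, ?_⟩, ?_, ?_⟩
    · intro s t
      have := hPcge x s t
      simp only [hPdef]
      linarith
    · rw [pt_zero_le_iff]
      constructor
      · intro s
        simp only [hPdef, hPcdef]
        exact le_max_left _ _
      · intro t
        simp only [hPdef, hPrdef]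
        exact le_max_left _ _
    · intro s hs
      simp only [hPdef] at hs ⊢
      have hsup : Pc x s = Finset.univ.sup' Finset.univ_nonempty (fun t => μ s t - Pr x t) := by
        rw [hPcdef]
        simp only
        rcases le_or_gt (Finset.univ.sup' Finset.univ_nonempty (fun t => μ s t - Pr x t)) 0 with h | h
        · exfalso
          rw [hPcdef] at hs
          simp only at hs
          rw [max_eq_left h] at hs
          exact lt_irrefl 0 hs
        · rw [max_eq_right (le_of_lt h)]
      obtain ⟨t₀, _, ht₀⟩ := Finset.exists_mem_eq_sup' Finset.univ_nonempty
        (fun t => μ s t - Pr x t)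
      refine ⟨t₀, ?_⟩
      rw [hsup, ht₀]
      ring
    · intro t ht
      simp only [hPdef] at ht ⊢
      have hsup : Pr x t = A.sup' hAne (fun a => μ a t - u a - x a) := by
        rw [hPrdef]
        simp only
        rcases le_or_gt (A.sup' hAne (fun a => μ a t - u a - x a)) 0 with h | h
        · exfalso
          rw [hPrdef] at ht
          simp only at ht
          rw [max_eq_left h] at ht
          exact lt_irrefl 0 ht
        · rw [max_eq_right (le_of_lt h)]
      obtain ⟨a₁, ha₁, hae⟩ := Finset.exists_mem_eq_sup' hAne (fun a => μ a t - u a - x a)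
      refine ⟨a₁, ?_⟩
      rw [hC2 x hx a₁ ha₁, hsup, hae]
      ring
  -- affine selection sets
  set gfun : (S → Option S) → S → (S → ℝ) → ℝ :=
    fun gs t x => (gs t).elim 0 (fun a => μ a t - u a - x a) with hgfun
  set hfun : ((S → Option S) × (S → Option S)) → S → (S → ℝ) → ℝ :=
    fun ι s x => (ι.2 s).elim 0 (fun t => μ s t - gfun ι.1 t x) with hhfun
  set Cset : ((S → Option S) × (S → Option S)) → Set (S → ℝ) :=
    fun ι => {x | (∀ t, Pr x t = gfun ι.1 t x) ∧ (∀ s, Pc x s = hfun ι s x)} with hCset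
  have hPrcont : ∀ t, Continuous (fun x : S → ℝ => Pr x t) := by
    intro t
    have hrw : (fun x : S → ℝ => A.sup' hAne (fun a => μ a t - u a - x a))
        = A.sup' hAne (fun a x => μ a t - u a - x a) := by
      funext x
      rw [Finset.sup'_apply]
    have hc2 : Continuous (fun x : S → ℝ => A.sup' hAne (fun a => μ a t - u a - x a)) := by
      rw [hrw]
      exact Continuous.finset_sup' hAne
        (fun a _ => (continuous_const.sub continuous_const).sub (continuous_apply a))
    simp only [hPrdef]
    exact continuous_const.max hc2
  have hPccont : ∀ s, Continuous (fun x : S → ℝ => Pc x s) := by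
    intro s
    have hrw : (fun x : S → ℝ =>
          Finset.univ.sup' Finset.univ_nonempty (fun t => μ s t - Pr x t))
        = Finset.univ.sup' Finset.univ_nonempty (fun t x => μ s t - Pr x t) := by
      funext x
      rw [Finset.sup'_apply]
    have hc2 : Continuous (fun x : S → ℝ =>
        Finset.univ.sup' Finset.univ_nonempty (fun t => μ s t - Pr x t)) := by
      rw [hrw]
      exact Continuous.finset_sup' Finset.univ_nonempty
        (fun t _ => continuous_const.sub (hPrcont t))
    simp only [hPcdef]
    exact continuous_const.max hc2
  have hgcont : ∀ gs t, Continuous (fun x => gfun gs t x) := by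
    intro gs t
    rw [hgfun]
    cases h : gs t <;> simp only [h, Option.elim_none, Option.elim_some]
    · exact continuous_const
    · exact (continuous_const.sub continuous_const).sub (continuous_apply _)
  have hhcont : ∀ ι s, Continuous (fun x => hfun ι s x) := by
    intro ι s
    rw [hhfun]
    cases h : ι.2 s <;> simp only [h, Option.elim_none, Option.elim_some]
    · exact continuous_const
    · exact continuous_const.sub (hgcont ι.1 _)
  have hclosed : ∀ ι, IsClosed (Cset ι) := by
    intro ι
    have hrw : Cset ι = (⋂ t, {x | Pr x t = gfun ι.1 t x}) ∩ ⋂ s, {x | Pc x s = hfun ι s x} := by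
      ext x
      simp only [hCset, Set.mem_setOf_eq, Set.mem_inter_iff, Set.mem_iInter]
    rw [hrw]
    exact IsClosed.inter (isClosed_iInter (fun t => isClosed_eq (hPrcont t) (hgcont ι.1 t)))
      (isClosed_iInter (fun s => isClosed_eq (hPccont s) (hhcont ι s)))
  have hcover : ⋃ ι, Cset ι = Set.univ := by
    rw [Set.eq_univ_iff_forall]
    intro x
    have hgsel : ∀ t, ∃ o : Option S, Pr x t = o.elim 0 (fun a => μ a t - u a - x a) := by
      intro t
      by_cases h : Pr x t = 0
      · exact ⟨none, by rw [h, Option.elim_none]⟩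
      · have hpos : Pr x t = A.sup' hAne (fun a => μ a t - u a - x a) := by
          rw [hPrdef]
          simp only
          rcases le_or_gt (A.sup' hAne (fun a => μ a t - u a - x a)) 0 with h' | h'
          · exfalso
            apply h
            rw [hPrdef]
            simp only
            rw [max_eq_left h']
          · rw [max_eq_right (le_of_lt h')]
        obtain ⟨a, haA, hae⟩ := Finset.exists_mem_eq_sup' hAne (fun a => μ a t - u a - x a)
        exact ⟨some a, by rw [Option.elim_some, hpos, hae]⟩
    choose gsel hgsel using hgsel
    have hhsel : ∀ s, ∃ o : Option S, Pc x s = o.elim 0 (fun t => μ s t - gfun gsel t x) := by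
      intro s
      by_cases h : Pc x s = 0
      · exact ⟨none, by rw [h, Option.elim_none]⟩
      · have hpos : Pc x s = Finset.univ.sup' Finset.univ_nonempty (fun t => μ s t - Pr x t) := by
          rw [hPcdef]
          simp only
          rcases le_or_gt (Finset.univ.sup' Finset.univ_nonempty (fun t => μ s t - Pr x t)) 0
            with h' | h'
          · exfalso
            apply h
            rw [hPcdef]
            simp only
            rw [max_eq_left h']
          · rw [max_eq_right (le_of_lt h')]
        obtain ⟨t₀, _, ht₀⟩ := Finset.exists_mem_eq_sup' Finset.univ_nonempty
          (fun t => μ s t - Pr x t)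
        refine ⟨some t₀, ?_⟩
        rw [Option.elim_some, hpos, ht₀]
        have : gfun gsel t₀ x = Pr x t₀ := by
          rw [hgfun]
          exact (hgsel t₀).symm
        rw [this]
    choose hsel hhsel using hhsel
    refine Set.mem_iUnion.2 ⟨(gsel, hsel), ?_, ?_⟩
    · intro t
      rw [hgfun]
      exact hgsel t
    · intro s
      rw [hhfun]
      exact hhsel s
  -- Baire category argument
  have hdense := dense_iUnion_interior_of_closed hclosed hcover
  obtain ⟨y, hyb, hyi⟩ := hdense.inter_open_nonempty (Metric.ball 0 ε₀) Metric.isOpen_ball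
    ⟨0, Metric.mem_ball_self hε₀pos⟩
  obtain ⟨ι, hyι⟩ := Set.mem_iUnion.1 hyi
  obtain ⟨r1, hr1pos, hball1⟩ := Metric.isOpen_iff.1 isOpen_interior y hyι
  obtain ⟨r2, hr2pos, hball2⟩ := Metric.isOpen_iff.1 Metric.isOpen_ball y hyb
  set r : ℝ := min r1 r2 with hr
  have hrpos : 0 < r := lt_min hr1pos hr2pos
  have hball1' : Metric.ball y r ⊆ Cset ι :=
    (Metric.ball_subset_ball (min_le_left _ _)).trans (hball1.trans interior_subset)
  have hball2' : Metric.ball y r ⊆ Metric.ball 0 ε₀ :=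
    (Metric.ball_subset_ball (min_le_right _ _)).trans hball2
  have hsmall : ∀ x ∈ Metric.ball y r, ∀ a ∈ A, |x a| ≤ ε₀ := by
    intro x hx a _
    have h1 := hball2' hx
    rw [Metric.mem_ball] at h1
    have h2 := (dist_pi_lt_iff hε₀pos).1 h1 a
    rw [Real.dist_eq, Pi.zero_apply, sub_zero] at h2
    linarith
  -- the affine map
  set φ2 : S → ((S → ℝ) →ₗ[ℝ] ℝ) :=
    fun t => (ι.1 t).elim 0 (fun a => -(LinearMap.proj a)) with hφ2
  set φ1 : S → ((S → ℝ) →ₗ[ℝ] ℝ) := fun s => (ι.2 s).elim 0 (fun t => -(φ2 t)) with hφ1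
  set Llin : (S → ℝ) →ₗ[ℝ] Pt S := LinearMap.prod (LinearMap.pi φ1) (LinearMap.pi φ2) with hLlin
  have hg2 : ∀ t (x : S → ℝ), gfun ι.1 t x = φ2 t x + gfun ι.1 t 0 := by
    intro t x
    rw [hgfun, hφ2]
    cases h : ι.1 t <;>
      simp only [h, Option.elim_none, Option.elim_some, LinearMap.zero_apply,
        LinearMap.neg_apply, LinearMap.proj_apply, Pi.zero_apply]
    · ring
    · ring
  have hh1 : ∀ s (x : S → ℝ), hfun ι s x = φ1 s x + hfun ι s 0 := by
    intro s x
    rw [hhfun, hφ1]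
    cases h : ι.2 s <;>
      simp only [h, Option.elim_none, Option.elim_some, LinearMap.zero_apply,
        LinearMap.neg_apply]
    · ring
    · rw [hg2]
      ring
  have hLkey : ∀ x : S → ℝ,
      ((fun s => hfun ι s x, fun t => gfun ι.1 t x) : Pt S)
        = Llin x + (fun s => hfun ι s 0, fun t => gfun ι.1 t 0) := by
    intro x
    apply Prod.ext
    · funext s
      have hcomp : (Llin x + ((fun s => hfun ι s 0, fun t => gfun ι.1 t 0) : Pt S)).1 s
          = φ1 s x + hfun ι s 0 := by
        rw [hLlin]
        simp only [Prod.fst_add, LinearMap.prod_apply, Pi.prod, Pi.add_apply,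
          LinearMap.pi_apply]
        rfl
      rw [hcomp]
      exact hh1 s x
    · funext t
      have hcomp : (Llin x + ((fun s => hfun ι s 0, fun t => gfun ι.1 t 0) : Pt S)).2 t
          = φ2 t x + gfun ι.1 t 0 := by
        rw [hLlin]
        simp only [Prod.snd_add, LinearMap.prod_apply, Pi.prod, Pi.add_apply,
          LinearMap.pi_apply]
        rfl
      rw [hcomp]
      exact hg2 t x
  set L : (S → ℝ) →ᵃ[ℝ] Pt S := AffineMap.mk'
    (fun x => ((fun s => hfun ι s x, fun t => gfun ι.1 t x) : Pt S)) Llin 0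
    (by
      intro p
      rw [vsub_eq_sub, sub_zero, vadd_eq_add]
      exact hLkey p) with hL
  have hLcoe : ∀ x, L x = ((fun s => hfun ι s x, fun t => gfun ι.1 t x) : Pt S) := by
    intro x
    rw [hL, AffineMap.coe_mk']
  have hagree : ∀ x ∈ Metric.ball y r, P x = L x := by
    intro x hx
    have hc := hball1' hx
    rw [hCset] at hc
    obtain ⟨hc1, hc2⟩ := hc
    rw [hLcoe, hPdef]
    apply Prod.ext
    · funext s
      exact hc2 s
    · funext t
      exact hc1 t
  -- enumeration of A
  set aEnum : Fin n → S := fun j => ↑(A.equivFin.symm (finCongr hA.symm j)) with haEnum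
  have haEnumA : ∀ j, aEnum j ∈ A := fun j => (A.equivFin.symm (finCongr hA.symm j)).2
  have haEnumInj : Function.Injective aEnum := by
    intro j j' h
    have h1 : A.equivFin.symm (finCongr hA.symm j) = A.equivFin.symm (finCongr hA.symm j') :=
      Subtype.ext h
    exact (finCongr hA.symm).injective (A.equivFin.symm.injective h1)
  -- vertices
  set vert : Fin (n+1) → (S → ℝ) := fun i =>
    if h : i = 0 then y else y + (r/2) • (Pi.single (aEnum (i.pred h)) 1 : S → ℝ) with hvert
  have hvert0 : vert 0 = y := by rw [hvert]; simp
  have hvertball : ∀ i, vert i ∈ Metric.ball y r := by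
    intro i
    rw [hvert]
    by_cases h : i = 0
    · simp only [dif_pos h]
      exact Metric.mem_ball_self hrpos
    · simp only [dif_neg h]
      rw [Metric.mem_ball]
      rw [Metric.mem_ball] at *
      have hco : ∀ s, dist ((y + (r/2) • (Pi.single (aEnum (i.pred h)) 1 : S → ℝ)) s) (y s) < r := by
        intro s
        rw [Pi.add_apply, Real.dist_eq, add_sub_cancel_left, Pi.smul_apply, smul_eq_mul]
        rw [Pi.single_apply]
        by_cases hs : s = aEnum (i.pred h)
        · rw [if_pos hs]
          rw [abs_of_nonneg (by linarith)]
          linarith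
        · rw [if_neg hs]
          simp only [mul_zero, abs_zero]
          exact hrpos
      exact (dist_pi_lt_iff hrpos).2 hco
  set f : Fin (n+1) → Pt S := fun i => P (vert i) with hfdef
  have hrange : Set.range f = ⇑L '' Set.range vert := by
    rw [← Set.range_comp]
    have hfeq : f = ⇑L ∘ vert := by
      funext i
      exact hagree (vert i) (hvertball i)
    rw [hfeq]
  have hhull : convexHull ℝ (Set.range f) ⊆ TT μ := by
    rw [hrange, ← AffineMap.image_convexHull]
    rintro q ⟨x, hx, rfl⟩
    have hxball : x ∈ Metric.ball y r :=
      (convexHull_min (Set.range_subset_iff.2 hvertball) (convex_ball y r)) hx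
    rw [← hagree x hxball]
    exact hmem x (hsmall x hxball)
  have hfc : ∀ i (j : Fin n), (f i).1 (aEnum j) = u (aEnum j) + vert i (aEnum j) := by
    intro i j
    rw [hfdef]
    simp only [hPdef]
    exact hC2 (vert i) (hsmall (vert i) (hvertball i)) (aEnum j) (haEnumA j)
  have hvertval : ∀ (i : Fin (n+1)) (h : i ≠ 0) (j : Fin n),
      vert i (aEnum j) - y (aEnum j) = if aEnum j = aEnum (i.pred h) then r/2 else 0 := by
    intro i h j
    rw [hvert]
    simp only [dif_neg h, Pi.add_apply, Pi.smul_apply, smul_eq_mul, Pi.single_apply]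
    by_cases hs : aEnum j = aEnum (i.pred h)
    · rw [if_pos hs, if_pos hs]
      ring
    · rw [if_neg hs, if_neg hs]
      ring
  have haff : AffineIndependent ℝ f := by
    rw [affineIndependent_iff_linearIndependent_vsub ℝ f 0]
    set Φ : Pt S →ₗ[ℝ] (Fin n → ℝ) := LinearMap.pi
      (fun j => (LinearMap.proj (aEnum j)).comp (LinearMap.fst ℝ (S → ℝ) (S → ℝ))) with hΦ
    apply LinearIndependent.of_comp Φ
    rw [linearIndependent_iff']
    intro tset cf hrel i₀ hi₀
    have hval : ∀ (i : {x : Fin (n + 1) // x ≠ (0 : Fin (n+1))}) (j : Fin n),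
        Φ ((fun k : {x : Fin (n + 1) // x ≠ (0 : Fin (n+1))} => f ↑k -ᵥ f 0) i) j
          = if aEnum j = aEnum ((↑i : Fin (n+1)).pred i.2) then r/2 else 0 := by
      intro i j
      rw [hΦ]
      simp only [LinearMap.pi_apply, LinearMap.comp_apply, LinearMap.fst_apply,
        LinearMap.proj_apply, vsub_eq_sub]
      have hcm : (f ↑i - f 0).1 (aEnum j) = (f ↑i).1 (aEnum j) - (f 0).1 (aEnum j) := rfl
      rw [hcm, hfc, hfc, hvert0]
      have h2 := hvertval ↑i i.2 j
      rw [← h2]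
      ring
    have heval := congrFun hrel ((↑i₀ : Fin (n+1)).pred i₀.2)
    rw [Finset.sum_apply] at heval
    have hsum : ∑ i ∈ tset,
        (cf i • (⇑Φ ∘ fun k : {x : Fin (n + 1) // x ≠ (0 : Fin (n+1))} => f ↑k -ᵥ f 0) i)
          ((↑i₀ : Fin (n+1)).pred i₀.2) = cf i₀ * (r/2) := by
      rw [Finset.sum_eq_single_of_mem i₀ hi₀]
      · rw [Pi.smul_apply, smul_eq_mul, Function.comp_apply, hval i₀]
        rw [if_pos rfl]
      · intro i hi hne
        rw [Pi.smul_apply, smul_eq_mul, Function.comp_apply, hval i]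
        rw [if_neg, mul_zero]
        intro hcc
        apply hne
        have h3 := haEnumInj hcc
        have h4 : (↑i₀ : Fin (n+1)) = ↑i := by
          have := Fin.pred_inj.1 h3
          exact this
        exact Subtype.ext h4.symm
    rw [hsum] at heval
    rw [Pi.zero_apply] at heval
    have hr2 : r/2 ≠ 0 := by positivity
    rcases mul_eq_zero.1 heval with h | h
    · exact h
    · exact absurd h hr2
  exact ⟨f, haff, hhull⟩
end Backward

end Aux

/-- Theorem 2.14 (dimension criterion for the tight span).  `dim T_μ ≥ n` iff
there are `n`-element subsets `A, B ⊆ S` such that the maximum-weight matching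
problem on the complete bipartite graph `(A, B)` with weights `μ(a,b)` has a
unique optimal solution, which is a perfect matching. -/
theorem stmt16 {S : Type*} [Fintype S] [Nonempty S] [DecidableEq S]
    (μ : S → S → ℝ) (hμ : DirDist μ) (n : ℕ) (hn : 0 < n) :
    (∃ f : Fin (n + 1) → Pt S, AffineIndependent ℝ f ∧
      convexHull ℝ (Set.range f) ⊆ TT μ) ↔
    (∃ (A B : Finset S) (σ : S → S), A.card = n ∧ B.card = n ∧
      Set.BijOn σ ↑A ↑B ∧
      ∀ M : Finset (S × S), ↑M ⊆ (↑A ×ˢ ↑B : Set (S × S)) →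
        (∀ p ∈ M, ∀ q ∈ M, p ≠ q → p.1 ≠ q.1 ∧ p.2 ≠ q.2) →
        M ≠ A.image (fun a => (a, σ a)) →
        ∑ p ∈ M, μ p.1 p.2 < ∑ a ∈ A, μ a (σ a)) := by
  constructor
  · rintro ⟨f, hf, hhull⟩
    exact forward μ hμ n hn f hf hhull
  · rintro ⟨A, B, σ, hA, hB, hbij, huniq⟩
    exact backward μ hμ n hn A B σ hA hB hbij huniq
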